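/- arXiv:math/0501110 — 3 statements merged into one kernel-verified Lean document; each statement's English description precedes it below -/
import Mathlib

section
/- Let v₁, v₂, v₃, v₄ be pairwise distinct vectors in ℝ² each of Euclidean norm 1 with v₁ + v₂ + v₃ + v₄ = 0. Then there exist a rotation R of ℝ² (an element of the special orthogonal group SO(2)), a real number α with 0 < α ≤ π/4, and a permutation σ of {1,2,3,4} such that R v_{σ(1)} = (cos α, sin α), R v_{σ(2)} = (cos α, -sin α), R v_{σ(3)} = -(cos α, sin α), and R v_{σ(4)} = -(cos α, -sin α). -/
open Real



private lemma fuvnf_core (a0 a1 b0 b1 : ℝ) (ha : a0^2+a1^2 = 1) (hb : b0^2+b1^2 = 1)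
    (hd : 0 ≤ a0*b0 + a1*b1) (hc : a0*b1 - a1*b0 < 0) :
    ∃ w0 w1 α : ℝ, w0^2 + w1^2 = 1 ∧ 0 < α ∧ α ≤ π/4 ∧
      w0*a0 - w1*a1 = Real.cos α ∧ w1*a0 + w0*a1 = Real.sin α ∧
      w0*b0 - w1*b1 = Real.cos α ∧ w1*b0 + w0*b1 = -Real.sin α := by
  set d := a0*b0 + a1*b1 with hd_def
  set cr := a0*b1 - a1*b0 with hcr_def
  have hpy : d^2 + cr^2 = 1 := by
    rw [hd_def, hcr_def]; linear_combination (b0^2+b1^2) * ha + hb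
  have hd1 : d < 1 := by nlinarith [sq_nonneg cr, sq_nonneg d]
  have hdm1 : -1 ≤ d := by nlinarith [sq_nonneg cr]
  refine ⟨Real.cos (Real.arccos d / 2) * a0 + Real.sin (Real.arccos d / 2) * a1,
    Real.sin (Real.arccos d / 2) * a0 - Real.cos (Real.arccos d / 2) * a1,
    Real.arccos d / 2, ?_, ?_, ?_, ?_, ?_, ?_, ?_⟩
  case _ =>
    linear_combination (a0^2+a1^2) * (Real.sin_sq_add_cos_sq (Real.arccos d / 2)) + ha
  case _ =>
    have := Real.arccos_pos.mpr hd1; linarith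
  case _ =>
    have := Real.arccos_le_pi_div_two.mpr hd; linarith
  all_goals {
    set α := Real.arccos d / 2 with hα
    have h2α : 2 * α = Real.arccos d := by rw [hα]; ring
    have hpyt := Real.sin_sq_add_cos_sq α
    have hd2 : d = Real.cos α ^ 2 - Real.sin α ^ 2 := by
      have h := Real.cos_two_mul α
      rw [h2α, Real.cos_arccos hdm1 (le_of_lt hd1)] at h
      linarith
    have hcr2 : cr = -(2 * Real.sin α * Real.cos α) := by
      have h1 : Real.sin (2*α) = Real.sqrt (1 - d^2) := by
        rw [h2α, Real.sin_arccos]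
      have h2 : Real.sqrt (1 - d^2) = -cr := by
        rw [show (1:ℝ) - d^2 = cr^2 by linarith, Real.sqrt_sq_eq_abs, abs_of_neg hc]
      rw [Real.sin_two_mul] at h1
      linarith
    rw [hd_def] at hd2; rw [hcr_def] at hcr2
    first
    | linear_combination Real.cos α * ha
    | linear_combination Real.sin α * ha
    | linear_combination Real.cos α * hd2 - Real.sin α * hcr2 + Real.cos α * hpyt
    | linear_combination Real.sin α * hd2 + Real.cos α * hcr2 - Real.sin α * hpyt
  }

private lemma fuvnf_rot_mem (w0 w1 : ℝ) (h : w0^2+w1^2 = 1) :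
    !![w0,-w1;w1,w0] ∈ Matrix.specialOrthogonalGroup (Fin 2) ℝ := by
  rw [Matrix.mem_specialOrthogonalGroup_iff]
  constructor
  · rw [Matrix.mem_orthogonalGroup_iff]
    ext i j
    fin_cases i <;> fin_cases j <;>
      simp [Matrix.mul_apply, Fin.sum_univ_two, Matrix.one_apply] <;> linarith
  · simp [Matrix.det_fin_two_of]; linarith

private lemma fuvnf_tEL (p q : ℝ) (x : EuclideanSpace ℝ (Fin 2)) (R : Matrix (Fin 2) (Fin 2) ℝ)
    (h0 : R 0 0 * x 0 + R 0 1 * x 1 = p) (h1 : R 1 0 * x 0 + R 1 1 * x 1 = q) :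
    Matrix.toEuclideanLin R x = (WithLp.equiv 2 (Fin 2 → ℝ)).symm ![p,q] := by
  apply (WithLp.equiv 2 (Fin 2 → ℝ)).injective
  rw [WithLp.equiv_apply, Matrix.ofLp_toEuclideanLin_apply, Equiv.apply_symm_apply]
  funext i
  fin_cases i <;> simp [Matrix.mulVec, dotProduct, Fin.sum_univ_two] <;>
    [exact h0; exact h1]

private lemma fuvnf_tEL_neg (p q : ℝ) (x : EuclideanSpace ℝ (Fin 2))
    (R : Matrix (Fin 2) (Fin 2) ℝ)
    (h0 : R 0 0 * x 0 + R 0 1 * x 1 = -p) (h1 : R 1 0 * x 0 + R 1 1 * x 1 = -q) :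
    Matrix.toEuclideanLin R x = -((WithLp.equiv 2 (Fin 2 → ℝ)).symm ![p,q]) := by
  apply (WithLp.equiv 2 (Fin 2 → ℝ)).injective
  rw [WithLp.equiv_apply, Matrix.ofLp_toEuclideanLin_apply]
  funext i
  fin_cases i <;> simp [Matrix.mulVec, dotProduct, Fin.sum_univ_two] <;>
    [exact h0; exact h1]

/-- given unit `x y` with `⟨x,y⟩ ≥ 0` and `cross(x,y) < 0`, rotate into normal form. -/
private lemma fuvnf_quad (x y : EuclideanSpace ℝ (Fin 2))
    (hx : (x 0)^2 + (x 1)^2 = 1) (hy : (y 0)^2 + (y 1)^2 = 1)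
    (hd : 0 ≤ x 0 * y 0 + x 1 * y 1) (hc : x 0 * y 1 - x 1 * y 0 < 0) :
    ∃ (R : Matrix.specialOrthogonalGroup (Fin 2) ℝ) (α : ℝ),
      0 < α ∧ α ≤ π / 4 ∧
      Matrix.toEuclideanLin (R : Matrix (Fin 2) (Fin 2) ℝ) x =
        (WithLp.equiv 2 (Fin 2 → ℝ)).symm ![Real.cos α, Real.sin α] ∧
      Matrix.toEuclideanLin (R : Matrix (Fin 2) (Fin 2) ℝ) y =
        (WithLp.equiv 2 (Fin 2 → ℝ)).symm ![Real.cos α, -Real.sin α] ∧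
      Matrix.toEuclideanLin (R : Matrix (Fin 2) (Fin 2) ℝ) (-x) =
        -((WithLp.equiv 2 (Fin 2 → ℝ)).symm ![Real.cos α, Real.sin α]) ∧
      Matrix.toEuclideanLin (R : Matrix (Fin 2) (Fin 2) ℝ) (-y) =
        -((WithLp.equiv 2 (Fin 2 → ℝ)).symm ![Real.cos α, -Real.sin α]) := by
  obtain ⟨w0, w1, α, hw, hα0, hα4, e1, e2, e3, e4⟩ :=
    fuvnf_core (x 0) (x 1) (y 0) (y 1) hx hy hd hc
  refine ⟨⟨!![w0,-w1;w1,w0], fuvnf_rot_mem w0 w1 hw⟩, α, hα0, hα4, ?_, ?_, ?_, ?_⟩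
  · exact fuvnf_tEL _ _ _ _ (by simpa using by linarith : _) (by simpa using by linarith : _)
  · exact fuvnf_tEL _ _ _ _ (by simpa using by linarith : _) (by simpa using by linarith : _)
  · refine fuvnf_tEL_neg _ _ _ _ ?_ ?_ <;> simp [PiLp.neg_apply] <;> linarith
  · refine fuvnf_tEL_neg _ _ _ _ ?_ ?_ <;> simp [PiLp.neg_apply] <;> linarith


set_option maxHeartbeats 1600000 in
private lemma fuvnf_main (w : Fin 4 → EuclideanSpace ℝ (Fin 2))
    (hu : ∀ i, (w i 0)^2 + (w i 1)^2 = 1)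
    (h2 : w 2 = -w 0) (h3 : w 3 = -w 1)
    (hne : w 1 ≠ w 0) (hne' : w 1 ≠ -w 0) :
    ∃ (R : Matrix.specialOrthogonalGroup (Fin 2) ℝ) (α : ℝ) (σ : Equiv.Perm (Fin 4)),
      0 < α ∧ α ≤ π / 4 ∧
      Matrix.toEuclideanLin (R : Matrix (Fin 2) (Fin 2) ℝ) (w (σ 0)) =
        (WithLp.equiv 2 (Fin 2 → ℝ)).symm ![Real.cos α, Real.sin α] ∧
      Matrix.toEuclideanLin (R : Matrix (Fin 2) (Fin 2) ℝ) (w (σ 1)) =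
        (WithLp.equiv 2 (Fin 2 → ℝ)).symm ![Real.cos α, -Real.sin α] ∧
      Matrix.toEuclideanLin (R : Matrix (Fin 2) (Fin 2) ℝ) (w (σ 2)) =
        -((WithLp.equiv 2 (Fin 2 → ℝ)).symm ![Real.cos α, Real.sin α]) ∧
      Matrix.toEuclideanLin (R : Matrix (Fin 2) (Fin 2) ℝ) (w (σ 3)) =
        -((WithLp.equiv 2 (Fin 2 → ℝ)).symm ![Real.cos α, -Real.sin α]) := by
  have hua := hu 0
  have hub := hu 1
  have hcr : w 0 0 * w 1 1 - w 0 1 * w 1 0 ≠ 0 := by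
    intro h
    have hsq : (w 0 0 * w 1 0 + w 0 1 * w 1 1)^2 = 1 := by
      linear_combination ((w 1 0)^2+(w 1 1)^2) * hua + hub
        - (w 0 0 * w 1 1 - w 0 1 * w 1 0 + 0) * h
    have hfac : (w 0 0 * w 1 0 + w 0 1 * w 1 1 - 1) *
        (w 0 0 * w 1 0 + w 0 1 * w 1 1 + 1) = 0 := by linear_combination hsq
    rcases mul_eq_zero.mp hfac with h1 | h1
    · apply hne
      have hz : (w 0 0 - w 1 0)^2 + (w 0 1 - w 1 1)^2 = 0 := by
        linear_combination hua + hub - 2 * h1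
      have e0 : w 1 0 = w 0 0 := by nlinarith [sq_nonneg (w 0 0 - w 1 0), sq_nonneg (w 0 1 - w 1 1)]
      have e1 : w 1 1 = w 0 1 := by nlinarith [sq_nonneg (w 0 0 - w 1 0), sq_nonneg (w 0 1 - w 1 1)]
      ext i
      fin_cases i
      · exact e0
      · exact e1
    · apply hne'
      have hz : (w 0 0 + w 1 0)^2 + (w 0 1 + w 1 1)^2 = 0 := by
        linear_combination hua + hub + 2 * h1
      have e0 : w 1 0 = -(w 0 0) := by
        nlinarith [sq_nonneg (w 0 0 + w 1 0), sq_nonneg (w 0 1 + w 1 1)]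
      have e1 : w 1 1 = -(w 0 1) := by
        nlinarith [sq_nonneg (w 0 0 + w 1 0), sq_nonneg (w 0 1 + w 1 1)]
      ext i
      fin_cases i
      · simpa [PiLp.neg_apply] using e0
      · simpa [PiLp.neg_apply] using e1
  rcases le_or_gt 0 (w 0 0 * w 1 0 + w 0 1 * w 1 1) with hd | hd
  all_goals rcases lt_or_gt_of_ne hcr with hc | hc
  · -- (x,y) = (w 0, w 1), σ' = id
    obtain ⟨R, α, h1, h4, q1, q2, q3, q4⟩ := fuvnf_quad (w 0) (w 1) hua hub hd hc
    refine ⟨R, α, Equiv.refl _, h1, h4, q1, q2, ?_, ?_⟩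
    · have e : (Equiv.refl (Fin 4)) 2 = 2 := by decide
      rw [e, h2]; exact q3
    · have e : (Equiv.refl (Fin 4)) 3 = 3 := by decide
      rw [e, h3]; exact q4
  · -- (x,y) = (w 1, w 0), σ' = (1,0,3,2)
    obtain ⟨R, α, h1, h4, q1, q2, q3, q4⟩ := fuvnf_quad (w 1) (w 0) hub hua
      (by nlinarith) (by nlinarith)
    let σ' : Equiv.Perm (Fin 4) := ⟨![1,0,3,2], ![1,0,3,2], by decide, by decide⟩
    have s0 : σ' 0 = 1 := by decide
    have s1 : σ' 1 = 0 := by decide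
    have s2 : σ' 2 = 3 := by decide
    have s3 : σ' 3 = 2 := by decide
    refine ⟨R, α, σ', h1, h4, ?_, ?_, ?_, ?_⟩
    · rw [s0]; exact q1
    · rw [s1]; exact q2
    · rw [s2, h3]; exact q3
    · rw [s3, h2]; exact q4
  · -- (x,y) = (-w 1, w 0), σ' = (3,0,1,2)
    obtain ⟨R, α, h1, h4, q1, q2, q3, q4⟩ := fuvnf_quad (-w 1) (w 0)
      (by simp only [PiLp.neg_apply]; nlinarith) hua
      (by simp only [PiLp.neg_apply]; nlinarith)
      (by simp only [PiLp.neg_apply]; nlinarith)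
    rw [neg_neg] at q3
    let σ' : Equiv.Perm (Fin 4) := ⟨![3,0,1,2], ![1,2,3,0], by decide, by decide⟩
    have s0 : σ' 0 = 3 := by decide
    have s1 : σ' 1 = 0 := by decide
    have s2 : σ' 2 = 1 := by decide
    have s3 : σ' 3 = 2 := by decide
    refine ⟨R, α, σ', h1, h4, ?_, ?_, ?_, ?_⟩
    · rw [s0, h3]; exact q1
    · rw [s1]; exact q2
    · rw [s2]; exact q3
    · rw [s3, h2]; exact q4
  · -- (x,y) = (w 0, -w 1), σ' = (0,3,2,1)
    obtain ⟨R, α, h1, h4, q1, q2, q3, q4⟩ := fuvnf_quad (w 0) (-w 1) hua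
      (by simp only [PiLp.neg_apply]; nlinarith)
      (by simp only [PiLp.neg_apply]; nlinarith)
      (by simp only [PiLp.neg_apply]; nlinarith)
    rw [neg_neg] at q4
    let σ' : Equiv.Perm (Fin 4) := ⟨![0,3,2,1], ![0,3,2,1], by decide, by decide⟩
    have s0 : σ' 0 = 0 := by decide
    have s1 : σ' 1 = 3 := by decide
    have s2 : σ' 2 = 2 := by decide
    have s3 : σ' 3 = 1 := by decide
    refine ⟨R, α, σ', h1, h4, ?_, ?_, ?_, ?_⟩
    · rw [s0]; exact q1
    · rw [s1, h3]; exact q2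
    · rw [s2, h2]; exact q3
    · rw [s3]; exact q4


set_option maxHeartbeats 2000000 in
/-- Four pairwise distinct unit vectors in the Euclidean plane summing to zero can,
after a rotation `R ∈ SO(2)` and a permutation, be put in the normal form
`(cos α, sin α), (cos α, -sin α), -(cos α, sin α), -(cos α, -sin α)` with
`α ∈ (0, π/4]`. -/
theorem four_unit_vectors_normal_form
    (v : Fin 4 → EuclideanSpace ℝ (Fin 2))
    (hinj : Function.Injective v)
    (hnorm : ∀ i, ‖v i‖ = 1)
    (hsum : v 0 + v 1 + v 2 + v 3 = 0) :
    ∃ (R : Matrix.specialOrthogonalGroup (Fin 2) ℝ) (α : ℝ) (σ : Equiv.Perm (Fin 4)),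
      0 < α ∧ α ≤ π / 4 ∧
      Matrix.toEuclideanLin (R : Matrix (Fin 2) (Fin 2) ℝ) (v (σ 0)) =
        (WithLp.equiv 2 (Fin 2 → ℝ)).symm ![Real.cos α, Real.sin α] ∧
      Matrix.toEuclideanLin (R : Matrix (Fin 2) (Fin 2) ℝ) (v (σ 1)) =
        (WithLp.equiv 2 (Fin 2 → ℝ)).symm ![Real.cos α, -Real.sin α] ∧
      Matrix.toEuclideanLin (R : Matrix (Fin 2) (Fin 2) ℝ) (v (σ 2)) =
        -((WithLp.equiv 2 (Fin 2 → ℝ)).symm ![Real.cos α, Real.sin α]) ∧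
      Matrix.toEuclideanLin (R : Matrix (Fin 2) (Fin 2) ℝ) (v (σ 3)) =
        -((WithLp.equiv 2 (Fin 2 → ℝ)).symm ![Real.cos α, -Real.sin α]) := by
  have hu : ∀ i, (v i 0)^2 + (v i 1)^2 = 1 := by
    intro i
    have h := hnorm i
    rw [EuclideanSpace.norm_eq] at h
    have := Real.sqrt_eq_one.mp (by simpa using h)
    simpa [Fin.sum_univ_two, sq] using this
  have hsx : v 0 0 + v 1 0 + v 2 0 + v 3 0 = 0 := by simpa using congrFun (congrArg WithLp.ofLp hsum) 0
  have hsy : v 0 1 + v 1 1 + v 2 1 + v 3 1 = 0 := by simpa using congrFun (congrArg WithLp.ofLp hsum) 1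
  have hg : (v 1 0 * v 2 0 + v 1 1 * v 2 1)^2 + (v 1 0 * v 3 0 + v 1 1 * v 3 1)^2
      + (v 2 0 * v 3 0 + v 2 1 * v 3 1)^2
      = 1 + 2*(v 1 0 * v 2 0 + v 1 1 * v 2 1)*(v 1 0 * v 3 0 + v 1 1 * v 3 1)
        *(v 2 0 * v 3 0 + v 2 1 * v 3 1) := by
    linear_combination (((v 2 0)^2+(v 2 1)^2)*((v 3 0)^2+(v 3 1)^2)
        - (v 2 0 * v 3 0 + v 2 1 * v 3 1)^2) * hu 1
      + (((v 3 0)^2+(v 3 1)^2) - (v 1 0 * v 3 0 + v 1 1 * v 3 1)^2) * hu 2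
      + (1 - (v 1 0 * v 2 0 + v 1 1 * v 2 1)^2) * hu 3
  have hS : (v 1 0 * v 2 0 + v 1 1 * v 2 1) + (v 1 0 * v 3 0 + v 1 1 * v 3 1)
      + (v 2 0 * v 3 0 + v 2 1 * v 3 1) = -1 := by
    have h : (v 1 0 + v 2 0 + v 3 0)^2 + (v 1 1 + v 2 1 + v 3 1)^2 = 1 := by
      rw [show v 1 0 + v 2 0 + v 3 0 = -(v 0 0) by linarith,
        show v 1 1 + v 2 1 + v 3 1 = -(v 0 1) by linarith]
      linear_combination hu 0
    linear_combination (h - hu 1 - hu 2 - hu 3) / 2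
  have hP : (1 + (v 1 0 * v 2 0 + v 1 1 * v 2 1)) * (1 + (v 1 0 * v 3 0 + v 1 1 * v 3 1))
      * (1 + (v 2 0 * v 3 0 + v 2 1 * v 3 1)) = 0 := by
    linear_combination ((1 + (v 1 0 * v 2 0 + v 1 1 * v 2 1) + (v 1 0 * v 3 0 + v 1 1 * v 3 1)
      + (v 2 0 * v 3 0 + v 2 1 * v 3 1)) * hS - hg) / 2
  have pairneg : ∀ i j : Fin 4, 1 + (v i 0 * v j 0 + v i 1 * v j 1) = 0 → v j = -(v i) := by
    intro i j hij
    have hz : (v i 0 + v j 0)^2 + (v i 1 + v j 1)^2 = 0 := by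
      linear_combination hu i + hu j + 2 * hij
    have e0 : v j 0 = -(v i 0) := by
      nlinarith [sq_nonneg (v i 0 + v j 0), sq_nonneg (v i 1 + v j 1)]
    have e1 : v j 1 = -(v i 1) := by
      nlinarith [sq_nonneg (v i 0 + v j 0), sq_nonneg (v i 1 + v j 1)]
    ext k
    fin_cases k
    · simpa [PiLp.neg_apply] using e0
    · simpa [PiLp.neg_apply] using e1
  rcases mul_eq_zero.mp hP with hP' | h23
  rcases mul_eq_zero.mp hP' with h12 | h13
  · -- v 2 = -(v 1) and v 3 = -(v 0); τ = (0,1,3,2)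
    have hA : v 2 = -(v 1) := pairneg 1 2 h12
    have e0 := congrFun (congrArg WithLp.ofLp hA) 0
    have e1 := congrFun (congrArg WithLp.ofLp hA) 1
    simp only [PiLp.neg_apply] at e0 e1
    have hB : v 3 = -(v 0) := by
      apply pairneg 0 3
      rw [show v 3 0 = -(v 0 0) by linarith, show v 3 1 = -(v 0 1) by linarith]
      linear_combination -hu 0
    let τ : Equiv.Perm (Fin 4) := ⟨![0,1,3,2], ![0,1,3,2], by decide, by decide⟩
    have t0 : τ 0 = 0 := by decide
    have t1 : τ 1 = 1 := by decide
    have t2 : τ 2 = 3 := by decide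
    have t3 : τ 3 = 2 := by decide
    have h2' : (v ∘ ⇑τ) 2 = -((v ∘ ⇑τ) 0) := by
      simp only [Function.comp_apply, t2, t0]; exact hB
    have h3' : (v ∘ ⇑τ) 3 = -((v ∘ ⇑τ) 1) := by
      simp only [Function.comp_apply, t3, t1]; exact hA
    have hne : (v ∘ ⇑τ) 1 ≠ (v ∘ ⇑τ) 0 := by
      simp only [Function.comp_apply, t1, t0]
      exact fun h => (by decide : (1 : Fin 4) ≠ 0) (hinj h)
    have hne' : (v ∘ ⇑τ) 1 ≠ -((v ∘ ⇑τ) 0) := by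
      simp only [Function.comp_apply, t1, t0]
      rw [← hB]
      exact fun h => (by decide : (1 : Fin 4) ≠ 3) (hinj h)
    obtain ⟨R, α, σ', a1, a2, a3, a4, a5, a6⟩ :=
      fuvnf_main (v ∘ ⇑τ) (fun i => hu (τ i)) h2' h3' hne hne'
    exact ⟨R, α, σ'.trans τ, a1, a2, a3, a4, a5, a6⟩
  · -- v 3 = -(v 1) and v 2 = -(v 0); τ = id
    have hA : v 3 = -(v 1) := pairneg 1 3 h13
    have e0 := congrFun (congrArg WithLp.ofLp hA) 0
    have e1 := congrFun (congrArg WithLp.ofLp hA) 1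
    simp only [PiLp.neg_apply] at e0 e1
    have hB : v 2 = -(v 0) := by
      apply pairneg 0 2
      rw [show v 2 0 = -(v 0 0) by linarith, show v 2 1 = -(v 0 1) by linarith]
      linear_combination -hu 0
    let τ : Equiv.Perm (Fin 4) := Equiv.refl (Fin 4)
    have h2' : (v ∘ ⇑τ) 2 = -((v ∘ ⇑τ) 0) := hB
    have h3' : (v ∘ ⇑τ) 3 = -((v ∘ ⇑τ) 1) := hA
    have hne : (v ∘ ⇑τ) 1 ≠ (v ∘ ⇑τ) 0 :=
      fun h => (by decide : (1 : Fin 4) ≠ 0) (hinj h)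
    have hne' : (v ∘ ⇑τ) 1 ≠ -((v ∘ ⇑τ) 0) := by
      show v 1 ≠ -(v 0)
      rw [← hB]
      exact fun h => (by decide : (1 : Fin 4) ≠ 2) (hinj h)
    obtain ⟨R, α, σ', a1, a2, a3, a4, a5, a6⟩ :=
      fuvnf_main (v ∘ ⇑τ) (fun i => hu (τ i)) h2' h3' hne hne'
    exact ⟨R, α, σ'.trans τ, a1, a2, a3, a4, a5, a6⟩
  · -- v 3 = -(v 2) and v 1 = -(v 0); τ = (0,2,1,3)
    have hA : v 3 = -(v 2) := pairneg 2 3 h23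
    have e0 := congrFun (congrArg WithLp.ofLp hA) 0
    have e1 := congrFun (congrArg WithLp.ofLp hA) 1
    simp only [PiLp.neg_apply] at e0 e1
    have hB : v 1 = -(v 0) := by
      apply pairneg 0 1
      rw [show v 1 0 = -(v 0 0) by linarith, show v 1 1 = -(v 0 1) by linarith]
      linear_combination -hu 0
    let τ : Equiv.Perm (Fin 4) := ⟨![0,2,1,3], ![0,2,1,3], by decide, by decide⟩
    have t0 : τ 0 = 0 := by decide
    have t1 : τ 1 = 2 := by decide
    have t2 : τ 2 = 1 := by decide
    have t3 : τ 3 = 3 := by decide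
    have h2' : (v ∘ ⇑τ) 2 = -((v ∘ ⇑τ) 0) := by
      simp only [Function.comp_apply, t2, t0]; exact hB
    have h3' : (v ∘ ⇑τ) 3 = -((v ∘ ⇑τ) 1) := by
      simp only [Function.comp_apply, t3, t1]; exact hA
    have hne : (v ∘ ⇑τ) 1 ≠ (v ∘ ⇑τ) 0 := by
      simp only [Function.comp_apply, t1, t0]
      exact fun h => (by decide : (2 : Fin 4) ≠ 0) (hinj h)
    have hne' : (v ∘ ⇑τ) 1 ≠ -((v ∘ ⇑τ) 0) := by
      simp only [Function.comp_apply, t1, t0]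
      rw [← hB]
      exact fun h => (by decide : (2 : Fin 4) ≠ 1) (hinj h)
    obtain ⟨R, α, σ', a1, a2, a3, a4, a5, a6⟩ :=
      fuvnf_main (v ∘ ⇑τ) (fun i => hu (τ i)) h2' h3' hne hne'
    exact ⟨R, α, σ'.trans τ, a1, a2, a3, a4, a5, a6⟩
end

section
/- Let n ≥ 2 and M ≥ 0 be integers. Let D = { c : Fin n → ℝ | c₀ = 0, cᵢ < cⱼ whenever i < j, and c_{n-1} < 1 }, a convex subset of ℝⁿ. Define G_M : D → ℝ by G_M(c) = Σ_{0 ≤ i < j ≤ n-1} Σ_{k=-M}^{M} log |cᵢ - cⱼ - k| (all arguments of the logarithm are nonzero on D). Then G_M is strictly concave on D. -/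
open Finset

private lemma log_le_combo {a b p q : ℝ} (ha : 0 ≤ a) (hb : 0 ≤ b) (hab : a + b = 1)
    (hp : 0 < p) (hq : 0 < q) :
    a * Real.log p + b * Real.log q ≤ Real.log (a * p + b * q) := by
  have := strictConcaveOn_log_Ioi.concaveOn.2 (Set.mem_Ioi.2 hp) (Set.mem_Ioi.2 hq) ha hb hab
  simpa [smul_eq_mul] using this

private lemma log_lt_combo {a b p q : ℝ} (ha : 0 < a) (hb : 0 < b) (hab : a + b = 1)
    (hp : 0 < p) (hq : 0 < q) (hpq : p ≠ q) :
    a * Real.log p + b * Real.log q < Real.log (a * p + b * q) := by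
  have := strictConcaveOn_log_Ioi.2 (Set.mem_Ioi.2 hp) (Set.mem_Ioi.2 hq) hpq ha hb hab
  simpa [smul_eq_mul] using this

/-- the basic per-term concavity inequality for `log |u - k|` with `u ∈ (-1, 0)`. -/
private lemma term_le {a b u v : ℝ} (ha : 0 < a) (hb : 0 < b) (hab : a + b = 1) (k : ℤ)
    (hu1 : -1 < u) (hu2 : u < 0) (hv1 : -1 < v) (hv2 : v < 0) :
    a * Real.log |u - (k : ℝ)| + b * Real.log |v - (k : ℝ)|
      ≤ Real.log |a * u + b * v - (k : ℝ)| := by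
  have hk : a * u + b * v - (k : ℝ) = a * (u - k) + b * (v - k) := by
    have : a * (k : ℝ) + b * k = k := by rw [← add_mul, hab, one_mul]
    linarith [mul_sub a u (k : ℝ), mul_sub b v (k : ℝ)]
  rcases le_or_gt 0 (k : ℝ) with hk0 | hk0
  · have h1 : u - (k : ℝ) < 0 := by linarith
    have h2 : v - (k : ℝ) < 0 := by linarith
    have h3 : a * u + b * v - (k : ℝ) < 0 := by rw [hk]; nlinarith
    rw [abs_of_neg h1, abs_of_neg h2, abs_of_neg h3, hk,
      show -(a * (u - k) + b * (v - k)) = a * (-(u - k)) + b * (-(v - k)) by ring]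
    exact log_le_combo ha.le hb.le hab (by linarith) (by linarith)
  · have hk1 : (k : ℝ) ≤ -1 := by
      have hkz : k < 0 := by exact_mod_cast hk0
      have : k ≤ -1 := by omega
      exact_mod_cast this
    have h1 : 0 < u - (k : ℝ) := by linarith
    have h2 : 0 < v - (k : ℝ) := by linarith
    have h3 : 0 < a * u + b * v - (k : ℝ) := by rw [hk]; nlinarith
    rw [abs_of_pos h1, abs_of_pos h2, abs_of_pos h3, hk]
    exact log_le_combo ha.le hb.le hab h1 h2

private lemma term_lt {a b u v : ℝ} (ha : 0 < a) (hb : 0 < b) (hab : a + b = 1) (k : ℤ)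
    (hu1 : -1 < u) (hu2 : u < 0) (hv1 : -1 < v) (hv2 : v < 0) (huv : u ≠ v) :
    a * Real.log |u - (k : ℝ)| + b * Real.log |v - (k : ℝ)|
      < Real.log |a * u + b * v - (k : ℝ)| := by
  have hk : a * u + b * v - (k : ℝ) = a * (u - k) + b * (v - k) := by
    have : a * (k : ℝ) + b * k = k := by rw [← add_mul, hab, one_mul]
    linarith [mul_sub a u (k : ℝ), mul_sub b v (k : ℝ)]
  rcases le_or_gt 0 (k : ℝ) with hk0 | hk0
  · have h1 : u - (k : ℝ) < 0 := by linarith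
    have h2 : v - (k : ℝ) < 0 := by linarith
    have h3 : a * u + b * v - (k : ℝ) < 0 := by rw [hk]; nlinarith
    rw [abs_of_neg h1, abs_of_neg h2, abs_of_neg h3, hk,
      show -(a * (u - k) + b * (v - k)) = a * (-(u - k)) + b * (-(v - k)) by ring]
    exact log_lt_combo ha hb hab (by linarith) (by linarith) (by intro h; apply huv; linarith)
  · have hk1 : (k : ℝ) ≤ -1 := by
      have hkz : k < 0 := by exact_mod_cast hk0
      have : k ≤ -1 := by omega
      exact_mod_cast this
    have h1 : 0 < u - (k : ℝ) := by linarith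
    have h2 : 0 < v - (k : ℝ) := by linarith
    have h3 : 0 < a * u + b * v - (k : ℝ) := by rw [hk]; nlinarith
    rw [abs_of_pos h1, abs_of_pos h2, abs_of_pos h3, hk]
    exact log_lt_combo ha hb hab h1 h2 (by intro h; apply huv; linarith)

/-- bounds on differences for configurations in the simplex. -/
private lemma diff_bounds {n : ℕ} (hn : 1 < n) {x : Fin n → ℝ}
    (h0 : x ⟨0, by omega⟩ = 0) (hmono : ∀ i j : Fin n, i < j → x i < x j)
    (hlast : x ⟨n - 1, by omega⟩ < 1) {i j : Fin n} (hij : i < j) :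
    -1 < x i - x j ∧ x i - x j < 0 := by
  have hxi : (0 : ℝ) ≤ x i := by
    rcases Nat.eq_zero_or_pos i.val with h | h
    · rw [show i = ⟨0, by omega⟩ from Fin.ext h, h0]
    · exact (h0 ▸ hmono ⟨0, by omega⟩ i (by simpa [Fin.lt_def] using h)).le
  have hxj : x j ≤ x ⟨n - 1, by omega⟩ := by
    rcases eq_or_lt_of_le (Nat.le_sub_one_of_lt j.isLt) with h | h
    · rw [show j = ⟨n - 1, by omega⟩ from Fin.ext h]
    · exact (hmono j ⟨n - 1, by omega⟩ (by simpa [Fin.lt_def] using h)).le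
  exact ⟨by linarith, by linarith [hmono i j hij]⟩

/-- The truncated logarithmic interaction energy
`G_M(c) = ∑_{i<j} ∑_{k=-M}^{M} log |cᵢ - cⱼ - k|` is strictly concave on the
simplex `D = {c : c₀ = 0, c increasing, c_{n-1} < 1}`. -/
theorem truncated_energy_strictConcaveOn
    (n : ℕ) (hn : 2 ≤ n) (M : ℕ) :
    StrictConcaveOn ℝ
      {c : Fin n → ℝ | c ⟨0, by omega⟩ = 0 ∧
        (∀ i j : Fin n, i < j → c i < c j) ∧ c ⟨n - 1, by omega⟩ < 1}
      (fun c : Fin n → ℝ =>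
        ∑ i : Fin n, ∑ j : Fin n,
          if i < j then
            ∑ k ∈ Finset.Icc (-(M : ℤ)) (M : ℤ), Real.log |c i - c j - (k : ℝ)|
          else 0) := by
  constructor
  · -- convexity of the domain
    intro x hx y hy a b ha hb hab
    obtain ⟨hx0, hxm, hxl⟩ := hx
    obtain ⟨hy0, hym, hyl⟩ := hy
    refine ⟨?_, ?_, ?_⟩
    · simp only [Pi.add_apply, Pi.smul_apply, smul_eq_mul, hx0, hy0]; ring
    · intro i j hij
      have h1 := hxm i j hij
      have h2 := hym i j hij
      simp only [Pi.add_apply, Pi.smul_apply, smul_eq_mul]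
      rcases ha.lt_or_eq with ha' | ha'
      · nlinarith [mul_lt_mul_of_pos_left h1 ha', mul_le_mul_of_nonneg_left h2.le hb]
      · have hb1 : b = 1 := by linarith
        rw [← ha', hb1]; simpa using h2
    · simp only [Pi.add_apply, Pi.smul_apply, smul_eq_mul]
      rcases ha.lt_or_eq with ha' | ha'
      · nlinarith [mul_lt_mul_of_pos_left hxl ha', mul_le_mul_of_nonneg_left hyl.le hb]
      · have hb1 : b = 1 := by linarith
        rw [← ha', hb1]; simpa using hyl
  · -- strict concavity inequality
    intro x hx y hy hxy a b ha hb hab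
    obtain ⟨hx0, hxm, hxl⟩ := hx
    obtain ⟨hy0, hym, hyl⟩ := hy
    obtain ⟨j0, hj0⟩ : ∃ j, x j ≠ y j := by
      by_contra h; push_neg at h; exact hxy (funext h)
    have hj0pos : (⟨0, by omega⟩ : Fin n) < j0 := by
      simp only [Fin.lt_def]
      rcases Nat.eq_zero_or_pos j0.val with h | h
      · exfalso; apply hj0
        rw [show j0 = ⟨0, by omega⟩ from Fin.ext h, hx0, hy0]
      · exact h
    have hcombo : ∀ i j : Fin n,
        (a • x + b • y) i - (a • x + b • y) j
          = a * (x i - x j) + b * (y i - y j) := by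
      intro i j
      simp only [Pi.add_apply, Pi.smul_apply, smul_eq_mul]; ring
    -- per (i,j,k) inequality
    have key : ∀ i j : Fin n, i < j → ∀ k : ℤ,
        a * Real.log |x i - x j - (k : ℝ)| + b * Real.log |y i - y j - (k : ℝ)|
          ≤ Real.log |(a • x + b • y) i - (a • x + b • y) j - (k : ℝ)| := by
      intro i j hij k
      obtain ⟨hu1, hu2⟩ := diff_bounds hn hx0 hxm hxl hij
      obtain ⟨hv1, hv2⟩ := diff_bounds hn hy0 hym hyl hij
      rw [hcombo]
      exact term_le ha hb hab k hu1 hu2 hv1 hv2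
    have pair_le : ∀ i j : Fin n,
        a * (if i < j then
              ∑ k ∈ Finset.Icc (-(M : ℤ)) (M : ℤ), Real.log |x i - x j - (k : ℝ)| else 0)
        + b * (if i < j then
              ∑ k ∈ Finset.Icc (-(M : ℤ)) (M : ℤ), Real.log |y i - y j - (k : ℝ)| else 0)
        ≤ (if i < j then
              ∑ k ∈ Finset.Icc (-(M : ℤ)) (M : ℤ),
                Real.log |(a • x + b • y) i - (a • x + b • y) j - (k : ℝ)| else 0) := by
      intro i j
      by_cases hij : i < j
      · simp only [if_pos hij]
        rw [Finset.mul_sum, Finset.mul_sum, ← Finset.sum_add_distrib]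
        exact Finset.sum_le_sum fun k _ => key i j hij k
      · simp [hij]
    have pair_lt :
        a * (∑ k ∈ Finset.Icc (-(M : ℤ)) (M : ℤ),
              Real.log |x ⟨0, by omega⟩ - x j0 - (k : ℝ)|)
        + b * (∑ k ∈ Finset.Icc (-(M : ℤ)) (M : ℤ),
              Real.log |y ⟨0, by omega⟩ - y j0 - (k : ℝ)|)
        < ∑ k ∈ Finset.Icc (-(M : ℤ)) (M : ℤ),
              Real.log |(a • x + b • y) ⟨0, by omega⟩ - (a • x + b • y) j0 - (k : ℝ)| := by
      rw [Finset.mul_sum, Finset.mul_sum, ← Finset.sum_add_distrib]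
      refine Finset.sum_lt_sum (fun k _ => key _ j0 hj0pos k) ⟨0, ?_, ?_⟩
      · simp [Finset.mem_Icc]
      · obtain ⟨hu1, hu2⟩ := diff_bounds hn hx0 hxm hxl hj0pos
        obtain ⟨hv1, hv2⟩ := diff_bounds hn hy0 hym hyl hj0pos
        rw [hcombo]
        refine term_lt ha hb hab 0 hu1 hu2 hv1 hv2 ?_
        rw [hx0, hy0]
        intro h; apply hj0; linarith
    simp only [smul_eq_mul]
    rw [Finset.mul_sum, Finset.mul_sum, ← Finset.sum_add_distrib]
    refine Finset.sum_lt_sum (fun i _ => by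
        rw [Finset.mul_sum, Finset.mul_sum, ← Finset.sum_add_distrib]
        exact Finset.sum_le_sum fun j _ => pair_le i j)
      ⟨⟨0, by omega⟩, Finset.mem_univ _, ?_⟩
    rw [Finset.mul_sum, Finset.mul_sum, ← Finset.sum_add_distrib]
    refine Finset.sum_lt_sum (fun j _ => pair_le _ j) ⟨j0, Finset.mem_univ _, ?_⟩
    simp only [if_pos hj0pos]
    exact pair_lt
end

section
/- Let n ≥ 1 be an integer and let c*ⱼ = j/n for j = 0, 1, …, n-1 be the equally spaced configuration. Then for every index j ∈ {0, …, n-1}, the symmetric truncated forces tend to zero: the sequence M ↦ Σ_{k=-M}^{M} Σ_{j'=0}^{n-1, (k,j') ≠ (0,j)} 1/(c*ⱼ - c*_{j'} - k) converges to 0 as M → ∞. -/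
open Finset Filter


private lemma aux_odd_sum (A : ℤ) : ∑ t ∈ Finset.Icc (-A) A, ((t : ℝ))⁻¹ = 0 := by
  refine Finset.sum_involution (fun t _ => -t) ?_ ?_ ?_ ?_
  · intro t _
    push_cast
    rw [inv_neg]
    ring
  · intro t _ h he
    apply h
    have : t = 0 := by omega
    simp [this]
  · intro t ht
    simp only [Finset.mem_Icc] at ht ⊢
    omega
  · intro t _
    simp

private lemma aux_ioc_bound (A B L : ℤ) (hL : 0 ≤ L) (hA : L ≤ A) :
    |∑ t ∈ Finset.Ioc A B, ((t : ℝ))⁻¹| ≤ ((B - A).toNat : ℝ) * ((L : ℝ) + 1)⁻¹ := by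
  calc |∑ t ∈ Finset.Ioc A B, ((t : ℝ))⁻¹|
      ≤ ∑ t ∈ Finset.Ioc A B, |((t : ℝ))⁻¹| := Finset.abs_sum_le_sum_abs _ _
    _ ≤ ∑ _t ∈ Finset.Ioc A B, ((L : ℝ) + 1)⁻¹ := by
        apply Finset.sum_le_sum
        intro t ht
        simp only [Finset.mem_Ioc] at ht
        have h1 : (L : ℝ) + 1 ≤ (t : ℝ) := by
          have : L + 1 ≤ t := by omega
          exact_mod_cast this
        have h0 : (0 : ℝ) < (L : ℝ) + 1 := by positivity
        rw [abs_inv, abs_of_nonneg (by linarith : (0:ℝ) ≤ (t:ℝ))]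
        exact inv_anti₀ h0 h1
    _ = ((B - A).toNat : ℝ) * ((L : ℝ) + 1)⁻¹ := by
        rw [Finset.sum_const, Int.card_Ioc, nsmul_eq_mul]

private lemma aux_icc_union (a b c : ℤ) (h1 : a ≤ b) (h2 : b ≤ c) :
    Finset.Icc a b ∪ Finset.Ioc b c = Finset.Icc a c := by
  ext x
  simp only [Finset.mem_union, Finset.mem_Icc, Finset.mem_Ioc]
  omega

private lemma aux_icc_bound (A B L : ℤ) (hL : 0 ≤ L) (hA : L ≤ A) (hB : L ≤ B) :
    |∑ t ∈ Finset.Icc (-A) B, ((t : ℝ))⁻¹| ≤ |(B : ℝ) - A| / ((L : ℝ) + 1) := by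
  have hdisj : ∀ (a b c : ℤ), Disjoint (Finset.Icc a b) (Finset.Ioc b c) := by
    intro a b c
    rw [Finset.disjoint_left]
    intro x hx hx'
    simp only [Finset.mem_Icc, Finset.mem_Ioc] at hx hx'
    omega
  rcases le_or_gt A B with h | h
  · rw [← aux_icc_union _ _ _ (by omega : -A ≤ A) h,
      Finset.sum_union (hdisj _ _ _), aux_odd_sum, zero_add]
    have := aux_ioc_bound A B L hL hA
    calc |∑ t ∈ Finset.Ioc A B, ((t : ℝ))⁻¹| ≤ ((B - A).toNat : ℝ) * ((L : ℝ) + 1)⁻¹ := this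
      _ = |(B : ℝ) - A| / ((L : ℝ) + 1) := by
          have hab : (A : ℝ) ≤ B := by exact_mod_cast h
          rw [abs_of_nonneg (by linarith : (0:ℝ) ≤ (B:ℝ) - A), div_eq_mul_inv]
          congr 1
          have : ((B - A).toNat : ℤ) = B - A := Int.toNat_of_nonneg (by omega)
          exact_mod_cast congrArg (Int.cast : ℤ → ℝ) this
  · have hsplit : ∑ t ∈ Finset.Icc (-A) B, ((t : ℝ))⁻¹
        + ∑ t ∈ Finset.Ioc B A, ((t : ℝ))⁻¹ = 0 := by
      rw [← Finset.sum_union (hdisj _ _ _),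
        aux_icc_union _ _ _ (by omega : -A ≤ B) (le_of_lt h), aux_odd_sum]
    have heq : ∑ t ∈ Finset.Icc (-A) B, ((t : ℝ))⁻¹
        = -∑ t ∈ Finset.Ioc B A, ((t : ℝ))⁻¹ := by linarith
    rw [heq, abs_neg]
    have := aux_ioc_bound B A L hL hB
    calc |∑ t ∈ Finset.Ioc B A, ((t : ℝ))⁻¹| ≤ ((A - B).toNat : ℝ) * ((L : ℝ) + 1)⁻¹ := this
      _ = |(B : ℝ) - A| / ((L : ℝ) + 1) := by
          rw [show |(B:ℝ) - A| = (A:ℝ) - B by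
            rw [abs_sub_comm]
            refine abs_of_nonneg ?_
            have hba : (B : ℝ) ≤ A := by exact_mod_cast h.le
            linarith, div_eq_mul_inv]
          congr 1
          have : ((A - B).toNat : ℤ) = A - B := Int.toNat_of_nonneg (by omega)
          exact_mod_cast congrArg (Int.cast : ℤ → ℝ) this

private lemma aux_reindex (n : ℕ) (hn : 1 ≤ n) (j : Fin n) (M : ℕ) :
    ∑ k ∈ Finset.Icc (-(M : ℤ)) (M : ℤ), ∑ j' : Fin n,
      (n : ℝ) * (((j.val : ℤ) - (j'.val : ℤ) - (n : ℤ) * k : ℤ) : ℝ)⁻¹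
    = ∑ t ∈ Finset.Icc (-((n : ℤ) * M + ((n : ℤ) - 1) - j.val)) ((j.val : ℤ) + (n : ℤ) * M),
        (n : ℝ) * ((t : ℝ))⁻¹ := by
  have hnpos : (0 : ℤ) < (n : ℤ) := by exact_mod_cast hn
  have hj : (j.val : ℤ) < n := by exact_mod_cast j.isLt
  rw [← Finset.sum_product']
  apply Finset.sum_nbij' (i := fun p : ℤ × Fin n => (j.val : ℤ) - (p.2.val : ℤ) - (n : ℤ) * p.1)
    (j := fun t : ℤ => ((((j.val : ℤ) - t) / n : ℤ),
      (⟨(((j.val : ℤ) - t) % n).toNat, by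
        have h1 : 0 ≤ ((j.val : ℤ) - t) % n := Int.emod_nonneg _ (by omega)
        have h2 : ((j.val : ℤ) - t) % n < n := Int.emod_lt_of_pos _ hnpos
        omega⟩ : Fin n)))
  · rintro ⟨k, j'⟩ hp
    simp only [Finset.mem_product, Finset.mem_Icc] at hp
    have hj' : (j'.val : ℤ) < n := by exact_mod_cast j'.isLt
    have h1 : (n : ℤ) * k ≤ n * M := by
      apply mul_le_mul_of_nonneg_left hp.1.2 (by omega)
    have h2 : -((n : ℤ) * M) ≤ n * k := by
      have := mul_le_mul_of_nonneg_left hp.1.1 (show (0:ℤ) ≤ n by omega)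
      linarith
    simp only [Finset.mem_Icc]
    constructor <;> [skip; skip] <;> omega
  · intro t ht
    simp only [Finset.mem_Icc] at ht
    simp only [Finset.mem_product, Finset.mem_Icc, Finset.mem_univ, and_true]
    have hc1 : (-(M : ℤ)) * (n : ℤ) = -((n : ℤ) * M) := by ring
    have hc2 : ((M : ℤ) + 1) * (n : ℤ) = (n : ℤ) * M + n := by ring
    constructor
    · rw [Int.le_ediv_iff_mul_le hnpos]
      omega
    · have : ((j.val : ℤ) - t) / n < M + 1 := by
        rw [Int.ediv_lt_iff_lt_mul hnpos]
        omega
      omega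
  · rintro ⟨k, j'⟩ hp
    have hj' : 0 ≤ (j'.val : ℤ) ∧ (j'.val : ℤ) < n :=
      ⟨Int.ofNat_nonneg _, by exact_mod_cast j'.isLt⟩
    have key : (j.val : ℤ) - ((j.val : ℤ) - (j'.val : ℤ) - (n : ℤ) * k) = j'.val + n * k := by
      ring
    have hdiv : ((j'.val : ℤ) + n * k) / n = k := by
      rw [show (j'.val : ℤ) + n * k = j'.val + k * n by ring,
        Int.add_mul_ediv_right _ _ (by omega : (n : ℤ) ≠ 0),
        Int.ediv_eq_zero_of_lt hj'.1 hj'.2, zero_add]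
    have hmod : ((j'.val : ℤ) + n * k) % n = j'.val := by
      rw [Int.add_mul_emod_self_left, Int.emod_eq_of_lt hj'.1 hj'.2]
    ext
    · simp only [key, hdiv]
    · simp only [key, hmod]
      exact Int.toNat_of_nonneg hj'.1 ▸ (by simp [hmod, key])
  · intro t ht
    have h1 : 0 ≤ ((j.val : ℤ) - t) % n := Int.emod_nonneg _ (by omega)
    have hme : ((j.val : ℤ) - t) % n + (n : ℤ) * (((j.val : ℤ) - t) / n) = (j.val : ℤ) - t :=
      Int.emod_add_mul_ediv _ _
    simp only
    rw [Int.toNat_of_nonneg h1]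
    omega
  · rintro ⟨k, j'⟩ _
    rfl

/-- For the equally spaced configuration `c*ⱼ = j/n`, the symmetrically truncated
forces `∑_{|k| ≤ M} ∑_{j', (k,j') ≠ (0,j)} 1/(c*ⱼ - c*_{j'} - k)` tend to zero as
`M → ∞`. -/
theorem equally_spaced_forces_tendsto_zero
    (n : ℕ) (hn : 1 ≤ n) (j : Fin n) :
    Filter.Tendsto
      (fun M : ℕ =>
        ∑ k ∈ Finset.Icc (-(M : ℤ)) (M : ℤ), ∑ j' : Fin n,
          if k = 0 ∧ j' = j then 0
          else ((j.val : ℝ) / n - (j'.val : ℝ) / n - (k : ℝ))⁻¹)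
      Filter.atTop (nhds 0) := by
  have hnR : (0 : ℝ) < (n : ℝ) := by exact_mod_cast hn
  have hnZ : (0 : ℤ) < (n : ℤ) := by exact_mod_cast hn
  have hjZ : (j.val : ℤ) < n := by exact_mod_cast j.isLt
  -- Step 1: the summand equals `n * ((j - j' - n k : ℤ) : ℝ)⁻¹` (note `(0:ℝ)⁻¹ = 0`).
  have hstep : ∀ M : ℕ,
      (∑ k ∈ Finset.Icc (-(M : ℤ)) (M : ℤ), ∑ j' : Fin n,
        if k = 0 ∧ j' = j then 0
        else ((j.val : ℝ) / n - (j'.val : ℝ) / n - (k : ℝ))⁻¹)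
      = ∑ k ∈ Finset.Icc (-(M : ℤ)) (M : ℤ), ∑ j' : Fin n,
          (n : ℝ) * (((j.val : ℤ) - (j'.val : ℤ) - (n : ℤ) * k : ℤ) : ℝ)⁻¹ := by
    intro M
    refine Finset.sum_congr rfl fun k _ => Finset.sum_congr rfl fun j' _ => ?_
    by_cases hc : k = 0 ∧ j' = j
    · obtain ⟨hk, hj'⟩ := hc
      subst hk; subst hj'
      simp
    · rw [if_neg hc]
      have hden : (j.val : ℝ) / n - (j'.val : ℝ) / n - (k : ℝ)
          = (((j.val : ℤ) - (j'.val : ℤ) - (n : ℤ) * k : ℤ) : ℝ) / n := by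
        push_cast
        field_simp
      rw [hden, inv_div, div_eq_mul_inv]
  -- Step 2: uniform bound `n^2 / (M+1)` via reindexing.
  have hbound : ∀ M : ℕ,
      ‖∑ k ∈ Finset.Icc (-(M : ℤ)) (M : ℤ), ∑ j' : Fin n,
        if k = 0 ∧ j' = j then 0
        else ((j.val : ℝ) / n - (j'.val : ℝ) / n - (k : ℝ))⁻¹‖
      ≤ (n : ℝ) ^ 2 * (1 / ((M : ℝ) + 1)) := by
    intro M
    rw [hstep M, aux_reindex n hn j M, ← Finset.mul_sum]
    set A : ℤ := (n : ℤ) * M + ((n : ℤ) - 1) - j.val with hA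
    set B : ℤ := (j.val : ℤ) + (n : ℤ) * M with hB
    have hnM : (0 : ℤ) ≤ (n : ℤ) * M := by positivity
    have hLA : (n : ℤ) * M ≤ A := by omega
    have hLB : (n : ℤ) * M ≤ B := by omega
    have h1 := aux_icc_bound A B ((n : ℤ) * M) hnM hLA hLB
    have habs : |(B : ℝ) - (A : ℝ)| ≤ (n : ℝ) := by
      have h2 : |B - A| ≤ (n : ℤ) := by
        rw [abs_le]
        omega
      calc |(B : ℝ) - (A : ℝ)| = ((|B - A| : ℤ) : ℝ) := by push_cast [abs_sub_comm]; rw [abs_sub_comm]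
        _ ≤ (n : ℝ) := by exact_mod_cast h2
    have hML : ((M : ℝ) + 1) ≤ (((n : ℤ) * M : ℤ) : ℝ) + 1 := by
      have : (M : ℤ) + 1 ≤ (n : ℤ) * M + 1 := by nlinarith
      exact_mod_cast this
    have hMpos : (0 : ℝ) < (M : ℝ) + 1 := by positivity
    rw [norm_mul, Real.norm_natCast, Real.norm_eq_abs]
    calc (n : ℝ) * |∑ t ∈ Finset.Icc (-A) B, ((t : ℝ))⁻¹|
        ≤ (n : ℝ) * (|(B : ℝ) - (A : ℝ)| / ((((n : ℤ) * M : ℤ) : ℝ) + 1)) :=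
          mul_le_mul_of_nonneg_left h1 hnR.le
      _ ≤ (n : ℝ) * ((n : ℝ) / ((M : ℝ) + 1)) := by
          refine mul_le_mul_of_nonneg_left ?_ hnR.le
          exact div_le_div₀ hnR.le habs hMpos hML
      _ = (n : ℝ) ^ 2 * (1 / ((M : ℝ) + 1)) := by ring
  refine squeeze_zero_norm hbound ?_
  simpa using tendsto_one_div_add_atTop_nhds_zero_nat.const_mul ((n : ℝ) ^ 2)
end
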